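/- There is an absolute constant C such that the following holds. Let Q, L ≥ 1 and R > 0, and let S be a subset of Z[i]\{0}. Then for every q₂ = u₂+v₂·i ∈ S with Q/2 < N(q₂) ≤ Q and every r₂ = x₂+y₂·i with (r₂,q₂) = 1 (setting k = x₂u₂+y₂v₂ and l = x₂v₂−y₂u₂), one has #{q = u+v·i ∈ S : N(q) ≤ L·Q and (f((u·k+v·l)/N(q₂)), f((−v·k+u·l)/N(q₂))) ∈ D_R(0)} ≤ C·(1 + R²·Q)·L. -/

import Mathlib

noncomputable section

/-- `e(t) = exp(2πit)`. -/
def e2pi (t : ℝ) : ℂ := Complex.exp (2 * Real.pi * Complex.I * t)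

/-- `T` is a reduced residue system modulo `q` in `ℤ[i]`: the reduction map is injective
on `T` and its image is exactly the set of units of `ℤ[i]/(q)`. -/
def IsRRS (q : GaussianInt) (T : Finset GaussianInt) : Prop :=
  Set.InjOn (fun r => Ideal.Quotient.mk (Ideal.span {q}) r) ↑T ∧
  (fun r => Ideal.Quotient.mk (Ideal.span {q}) r) '' ↑T = {x | IsUnit x}

/-- The inner exponential sum `∑_{n ∈ ℤ[i], N(n) ≤ N} a_n e(Tr(n r /(2q)))`,
where `Tr(x) = 2 Re x`. -/
def sieveTerm (a : GaussianInt → ℂ) (N : ℝ) (q r : GaussianInt) : ℂ :=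
  ∑ᶠ n ∈ {n : GaussianInt | (Zsqrtd.norm n : ℝ) ≤ N},
    a n * e2pi (2 * (GaussianInt.toComplex (n * r) / (2 * GaussianInt.toComplex q)).re)

/-- `Z = ∑_{N(n) ≤ N} |a_n|²`. -/
def Zsum (a : GaussianInt → ℂ) (N : ℝ) : ℝ :=
  ∑ᶠ n ∈ {n : GaussianInt | (Zsqrtd.norm n : ℝ) ≤ N}, ‖a n‖ ^ 2

/-- `Σ(Q,N;S)`, the large sieve sum over moduli `q ∈ S` with `Q/2 < N(q) ≤ Q`,
where for each modulus `q` the set `T q` is a reduced residue system modulo `q`. -/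
def Sig (Q N : ℝ) (S : Set GaussianInt) (T : GaussianInt → Finset GaussianInt)
    (a : GaussianInt → ℂ) : ℝ :=
  ∑ᶠ q ∈ {q : GaussianInt | q ∈ S ∧ Q / 2 < (Zsqrtd.norm q : ℝ) ∧ (Zsqrtd.norm q : ℝ) ≤ Q},
    ∑ r ∈ T q, ‖sieveTerm a N q r‖ ^ 2

/-- Two Gaussian integers are coprime if their only common divisors are units. -/
def GCoprime (r q : GaussianInt) : Prop :=
  ∀ d : GaussianInt, d ∣ r → d ∣ q → IsUnit d

/-- `f(z) = {z + 1/2} - 1/2`. -/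
def ffrac (z : ℝ) : ℝ := Int.fract (z + 1 / 2) - 1 / 2

lemma ffrac_eq (z : ℝ) : ffrac z = z - round z := by
  rw [ffrac, Int.fract, round_eq]; ring

lemma gnorm_sub_le (p q : GaussianInt) :
    Zsqrtd.norm (p - q) ≤ 2 * Zsqrtd.norm p + 2 * Zsqrtd.norm q := by
  simp only [Zsqrtd.norm_def, Zsqrtd.re_sub, Zsqrtd.im_sub]
  nlinarith [sq_nonneg (p.re + q.re), sq_nonneg (p.im + q.im)]

lemma box_lemma (M : ℤ) (hM : 0 ≤ M) : ∃ F : Finset GaussianInt,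
    (∀ w : GaussianInt, |w.re| ≤ M → |w.im| ≤ M → w ∈ F) ∧
    (F.card : ℝ) ≤ (2 * (M : ℝ) + 1) ^ 2 := by
  refine ⟨((Finset.Icc (-M) M) ×ˢ (Finset.Icc (-M) M)).image
    (fun p => (⟨p.1, p.2⟩ : GaussianInt)), ?_, ?_⟩
  · intro w h1 h2
    refine Finset.mem_image.mpr ⟨(w.re, w.im), ?_, rfl⟩
    simp only [Finset.mem_product, Finset.mem_Icc]
    constructor
    · exact ⟨neg_le_of_abs_le h1, le_of_abs_le h1⟩
    · exact ⟨neg_le_of_abs_le h2, le_of_abs_le h2⟩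
  · calc ((((Finset.Icc (-M) M) ×ˢ (Finset.Icc (-M) M)).image
        (fun p => (⟨p.1, p.2⟩ : GaussianInt))).card : ℝ)
        ≤ (((Finset.Icc (-M) M) ×ˢ (Finset.Icc (-M) M)).card : ℝ) := by
          exact_mod_cast Finset.card_image_le
      _ = ((Finset.Icc (-M) M).card : ℝ) * ((Finset.Icc (-M) M).card : ℝ) := by
          rw [Finset.card_product]; push_cast; ring
      _ ≤ (2 * (M:ℝ) + 1) ^ 2 := by
          have h : ((Finset.Icc (-M) M).card : ℝ) = 2 * (M:ℝ) + 1 := by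
            rw [Int.card_Icc]
            have : (M + 1 - -M) = 2*M+1 := by ring
            rw [this]
            have h2 : (0:ℤ) ≤ 2*M+1 := by linarith
            have h3 := Int.toNat_of_nonneg h2
            exact_mod_cast h3
          rw [h, sq]

lemma ncard_le_of_inj_finset {α β : Type*} (T : Set α) (F : Finset β) (f : α → β)
    (hinj : Set.InjOn f T) (hmem : ∀ x ∈ T, f x ∈ F) : (T.ncard : ℝ) ≤ F.card := by
  have h1 : T.ncard = (f '' T).ncard := (Set.ncard_image_of_injOn hinj).symm
  have h2 : (f '' T).ncard ≤ F.card := by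
    rw [← Set.ncard_coe_finset F]
    exact Set.ncard_le_ncard (by rintro y ⟨x, hx, rfl⟩; exact hmem x hx) F.finite_toSet
  rw [h1]; exact_mod_cast h2

set_option maxHeartbeats 1000000 in
/-- Proposition 2: counting moduli whose associated point lies in a small disk. -/
theorem ball_count :
    ∃ C : ℝ, 0 < C ∧ ∀ Q L R : ℝ, 1 ≤ Q → 1 ≤ L → 0 < R →
      ∀ S : Set GaussianInt, (0 : GaussianInt) ∉ S →
      ∀ u₂ v₂ x₂ y₂ : ℤ, (⟨u₂, v₂⟩ : GaussianInt) ∈ S →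
      Q / 2 < (Zsqrtd.norm (⟨u₂, v₂⟩ : GaussianInt) : ℝ) →
      (Zsqrtd.norm (⟨u₂, v₂⟩ : GaussianInt) : ℝ) ≤ Q →
      GCoprime ⟨x₂, y₂⟩ ⟨u₂, v₂⟩ →
      (Set.ncard {q : GaussianInt | q ∈ S ∧ (Zsqrtd.norm q : ℝ) ≤ L * Q ∧
          Real.sqrt
            (ffrac (((q.re * (x₂ * u₂ + y₂ * v₂) + q.im * (x₂ * v₂ - y₂ * u₂) : ℤ) : ℝ) /
                (Zsqrtd.norm (⟨u₂, v₂⟩ : GaussianInt) : ℝ)) ^ 2 +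
             ffrac ((((-q.im) * (x₂ * u₂ + y₂ * v₂) + q.re * (x₂ * v₂ - y₂ * u₂) : ℤ) : ℝ) /
                (Zsqrtd.norm (⟨u₂, v₂⟩ : GaussianInt) : ℝ)) ^ 2)
            ≤ R} : ℝ)
        ≤ C * (1 + R ^ 2 * Q) * L := by
  classical
  refine ⟨432, by norm_num, ?_⟩
  intro Q L R hQ hL hR S hS0 u₂ v₂ x₂ y₂ hq₂S hn₂lo hn₂hi hcop
  set q₂ : GaussianInt := (⟨u₂, v₂⟩ : GaussianInt) with hq₂def
  set r₂ : GaussianInt := (⟨x₂, y₂⟩ : GaussianInt) with hr₂def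
  set n₂ : ℤ := Zsqrtd.norm q₂ with hn₂def
  have hn₂pos : (0:ℝ) < (n₂:ℝ) := by
    have : (0:ℝ) < Q / 2 := by linarith
    linarith
  have hn₂pos' : (0:ℤ) < n₂ := by exact_mod_cast hn₂pos
  have hq₂ne : q₂ ≠ 0 := by
    intro h
    rw [hn₂def, h] at hn₂pos'
    simp [Zsqrtd.norm] at hn₂pos'
  have hcop' : IsCoprime r₂ q₂ := by
    rw [← EuclideanDomain.gcd_isUnit_iff]
    exact hcop _ (EuclideanDomain.gcd_dvd_left _ _) (EuclideanDomain.gcd_dvd_right _ _)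
  -- the basic integer data attached to a modulus q
  set A : GaussianInt → ℤ :=
    fun q => q.re * (x₂ * u₂ + y₂ * v₂) + q.im * (x₂ * v₂ - y₂ * u₂) with hAdef
  set B : GaussianInt → ℤ :=
    fun q => (-q.im) * (x₂ * u₂ + y₂ * v₂) + q.re * (x₂ * v₂ - y₂ * u₂) with hBdef
  set a : GaussianInt → ℤ := fun q => round ((A q : ℝ) / (n₂ : ℝ)) with hadef
  set b : GaussianInt → ℤ := fun q => round ((B q : ℝ) / (n₂ : ℝ)) with hbdef
  set w : GaussianInt → GaussianInt :=
    fun q => q * r₂ - (⟨a q, -(b q)⟩ : GaussianInt) * q₂ with hwdef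
  -- key algebraic identity
  have hid : ∀ q : GaussianInt,
      (⟨A q - a q * n₂, -(B q - b q * n₂)⟩ : GaussianInt) = star q₂ * w q := by
    intro q
    have hn : n₂ = u₂ * u₂ + v₂ * v₂ := by
      rw [hn₂def, hq₂def, Zsqrtd.norm_def]; ring
    ext
    · simp only [hwdef, hAdef, hBdef, hq₂def, hr₂def, hn, Zsqrtd.re_mul, Zsqrtd.im_mul,
        Zsqrtd.re_sub, Zsqrtd.im_sub, Zsqrtd.re_star, Zsqrtd.im_star]
      ring
    · simp only [hwdef, hAdef, hBdef, hq₂def, hr₂def, hn, Zsqrtd.re_mul, Zsqrtd.im_mul,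
        Zsqrtd.re_sub, Zsqrtd.im_sub, Zsqrtd.re_star, Zsqrtd.im_star]
      ring
  -- norm bound on w q for moduli in the set
  have hnormw : ∀ q : GaussianInt,
      Real.sqrt
            (ffrac (((q.re * (x₂ * u₂ + y₂ * v₂) + q.im * (x₂ * v₂ - y₂ * u₂) : ℤ) : ℝ) /
                (n₂ : ℝ)) ^ 2 +
             ffrac ((((-q.im) * (x₂ * u₂ + y₂ * v₂) + q.re * (x₂ * v₂ - y₂ * u₂) : ℤ) : ℝ) /
                (n₂ : ℝ)) ^ 2) ≤ R →
      (Zsqrtd.norm (w q) : ℝ) ≤ R ^ 2 * Q := by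
    intro q hqR
    have e1 : ((q.re * (x₂ * u₂ + y₂ * v₂) + q.im * (x₂ * v₂ - y₂ * u₂) : ℤ) : ℝ) = (A q : ℝ) := by
      rw [hAdef]
    have e2 : (((-q.im) * (x₂ * u₂ + y₂ * v₂) + q.re * (x₂ * v₂ - y₂ * u₂) : ℤ) : ℝ) = (B q : ℝ) := by
      rw [hBdef]
    rw [e1, e2, ffrac_eq, ffrac_eq] at hqR
    have hra : round ((A q : ℝ) / (n₂ : ℝ)) = a q := by rw [hadef]
    have hrb : round ((B q : ℝ) / (n₂ : ℝ)) = b q := by rw [hbdef]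
    rw [hra, hrb] at hqR
    set α : ℝ := (A q : ℝ) / (n₂ : ℝ) - (a q : ℝ) with hα
    set β : ℝ := (B q : ℝ) / (n₂ : ℝ) - (b q : ℝ) with hβ
    have h0 : (0:ℝ) ≤ α ^ 2 + β ^ 2 := by positivity
    have hsq : α ^ 2 + β ^ 2 ≤ R ^ 2 := by
      have h1 := Real.sq_sqrt h0
      nlinarith [Real.sqrt_nonneg (α ^ 2 + β ^ 2)]
    have eA : ((A q - a q * n₂ : ℤ) : ℝ) = α * (n₂ : ℝ) := by
      rw [hα]; push_cast; field_simp
    have eB : ((B q - b q * n₂ : ℤ) : ℝ) = β * (n₂ : ℝ) := by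
      rw [hβ]; push_cast; field_simp
    have hsq2 : ((A q - a q * n₂ : ℤ) : ℝ) ^ 2 + ((B q - b q * n₂ : ℤ) : ℝ) ^ 2
        ≤ R ^ 2 * (n₂ : ℝ) ^ 2 := by
      rw [eA, eB]
      nlinarith [mul_le_mul_of_nonneg_right hsq (sq_nonneg ((n₂:ℝ)))]
    have hnt : Zsqrtd.norm (⟨A q - a q * n₂, -(B q - b q * n₂)⟩ : GaussianInt)
        = n₂ * Zsqrtd.norm (w q) := by
      rw [hid q, Zsqrtd.norm_mul, Zsqrtd.norm_conj, ← hn₂def]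
    have hnt2 : (Zsqrtd.norm (⟨A q - a q * n₂, -(B q - b q * n₂)⟩ : GaussianInt) : ℝ)
        = ((A q - a q * n₂ : ℤ) : ℝ) ^ 2 + ((B q - b q * n₂ : ℤ) : ℝ) ^ 2 := by
      rw [Zsqrtd.norm_def]; push_cast; ring
    have hmain : (n₂ : ℝ) * (Zsqrtd.norm (w q) : ℝ) ≤ R ^ 2 * (n₂ : ℝ) ^ 2 := by
      have := hnt2 ▸ hsq2
      rw [hnt] at this
      push_cast at this
      linarith
    nlinarith [hn₂pos, hn₂hi, sq_nonneg R, Zsqrtd.norm_nonneg (by norm_num : (-1:ℤ) ≤ 0) (w q),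
      mul_le_mul_of_nonneg_left hn₂hi (mul_nonneg (sq_nonneg R) hn₂pos.le)]
  -- congruence: equal w forces same residue class mod q₂
  have hdvd : ∀ q q' : GaussianInt, w q = w q' → q₂ ∣ (q - q') := by
    intro q q' h
    rw [hwdef] at h
    simp only at h
    have h2 : (q - q') * r₂
        = q₂ * ((⟨a q, -(b q)⟩ : GaussianInt) - ⟨a q', -(b q')⟩) := by
      linear_combination h
    exact hcop'.symm.dvd_of_dvd_mul_right ⟨_, h2⟩
  -- choice of a base point in each fiber
  set q₀ : GaussianInt → GaussianInt := fun ω =>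
    if h : ∃ p : GaussianInt, (Zsqrtd.norm p : ℝ) ≤ L * Q ∧ w p = ω then h.choose else 0
    with hq₀def
  have hq₀ : ∀ q : GaussianInt, (Zsqrtd.norm q : ℝ) ≤ L * Q →
      (Zsqrtd.norm (q₀ (w q)) : ℝ) ≤ L * Q ∧ w (q₀ (w q)) = w q := by
    intro q hq
    have h : ∃ p : GaussianInt, (Zsqrtd.norm p : ℝ) ≤ L * Q ∧ w p = w q := ⟨q, hq, rfl⟩
    rw [hq₀def]
    simp only [dif_pos h]
    exact h.choose_spec
  set z : GaussianInt → GaussianInt := fun q => (q - q₀ (w q)) / q₂ with hzdef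
  have hzq : ∀ q : GaussianInt, (Zsqrtd.norm q : ℝ) ≤ L * Q →
      q₂ * z q = q - q₀ (w q) := by
    intro q hq
    rw [hzdef]
    exact EuclideanDomain.mul_div_cancel' hq₂ne (hdvd q (q₀ (w q)) (hq₀ q hq).2.symm)
  have hznorm : ∀ q : GaussianInt, (Zsqrtd.norm q : ℝ) ≤ L * Q →
      (Zsqrtd.norm (z q) : ℝ) ≤ 8 * L := by
    intro q hq
    have h1 : Zsqrtd.norm (q₂ * z q) = Zsqrtd.norm (q - q₀ (w q)) := by rw [hzq q hq]
    rw [Zsqrtd.norm_mul] at h1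
    have h2 := gnorm_sub_le q (q₀ (w q))
    have h3 := (hq₀ q hq).1
    have h4 : (n₂ : ℝ) * (Zsqrtd.norm (z q) : ℝ) ≤ 4 * (L * Q) := by
      have h1' : (n₂ : ℝ) * (Zsqrtd.norm (z q) : ℝ) = (Zsqrtd.norm (q - q₀ (w q)) : ℝ) := by
        exact_mod_cast congrArg (Int.cast : ℤ → ℝ) h1
      rw [h1']
      have h2' : (Zsqrtd.norm (q - q₀ (w q)) : ℝ)
          ≤ 2 * (Zsqrtd.norm q : ℝ) + 2 * (Zsqrtd.norm (q₀ (w q)) : ℝ) := by exact_mod_cast h2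
      linarith
    have hnz : (0:ℝ) ≤ (Zsqrtd.norm (z q) : ℝ) := by
      exact_mod_cast Zsqrtd.norm_nonneg (by norm_num : (-1:ℤ) ≤ 0) (z q)
    nlinarith [hn₂lo, hQ, hL, hnz, h4]
  clear_value A B a b
  -- the two boxes
  clear_value w q₀ z
  have hM₁ : (0:ℤ) ≤ ⌊R * Real.sqrt Q⌋ := Int.floor_nonneg.mpr (by positivity)
  have hM₂ : (0:ℤ) ≤ ⌊Real.sqrt (8 * L)⌋ := Int.floor_nonneg.mpr (Real.sqrt_nonneg _)
  obtain ⟨F₁, hF₁mem, hF₁card⟩ := box_lemma ⌊R * Real.sqrt Q⌋ hM₁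
  obtain ⟨F₂, hF₂mem, hF₂card⟩ := box_lemma ⌊Real.sqrt (8 * L)⌋ hM₂
  -- coordinate bounds
  have habs : ∀ (c : ℤ) (m : ℤ) (X : ℝ), 0 ≤ X → c ^ 2 ≤ m → (m : ℝ) ≤ X ^ 2 → |c| ≤ ⌊X⌋ := by
    intro c m X hX h1 h2
    rw [Int.le_floor]
    have h3 : ((|c| : ℤ) : ℝ) = |(c : ℝ)| := by push_cast; ring
    rw [h3, ← Real.sqrt_sq_eq_abs]
    calc Real.sqrt ((c:ℝ) ^ 2) ≤ Real.sqrt (X ^ 2) := by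
          apply Real.sqrt_le_sqrt
          have h4 : ((c:ℝ)) ^ 2 ≤ (m : ℝ) := by exact_mod_cast h1
          linarith
      _ = X := Real.sqrt_sq hX
  have hresq : ∀ g : GaussianInt, g.re ^ 2 ≤ Zsqrtd.norm g ∧ g.im ^ 2 ≤ Zsqrtd.norm g := by
    intro g
    constructor <;> · rw [Zsqrtd.norm_def]; nlinarith [sq_nonneg g.re, sq_nonneg g.im]
  -- the injection
  apply le_trans (ncard_le_of_inj_finset _ (F₁ ×ˢ F₂) (fun q => (w q, z q)) ?_ ?_)
  · -- final cardinality computation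
    have hx : (0:ℝ) ≤ R * Real.sqrt Q := by positivity
    have hxsq : (R * Real.sqrt Q) ^ 2 = R ^ 2 * Q := by
      rw [mul_pow, Real.sq_sqrt (by linarith : (0:ℝ) ≤ Q)]
    have hy : (1:ℝ) ≤ Real.sqrt (8 * L) := by
      rw [show (1:ℝ) = Real.sqrt 1 by simp]
      exact Real.sqrt_le_sqrt (by linarith)
    have hysq : (Real.sqrt (8 * L)) ^ 2 = 8 * L := Real.sq_sqrt (by linarith)
    have hb₁ : (F₁.card : ℝ) ≤ 6 * (1 + R ^ 2 * Q) := by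
      have hf := Int.floor_le (R * Real.sqrt Q)
      have hf0 : (0:ℝ) ≤ (⌊R * Real.sqrt Q⌋ : ℝ) := by exact_mod_cast hM₁
      nlinarith [hF₁card, sq_nonneg (R * Real.sqrt Q - 1)]
    have hb₂ : (F₂.card : ℝ) ≤ 72 * L := by
      have hf := Int.floor_le (Real.sqrt (8 * L))
      have hf0 : (0:ℝ) ≤ (⌊Real.sqrt (8 * L)⌋ : ℝ) := by exact_mod_cast hM₂
      nlinarith [hF₂card]
    have hcard : ((F₁ ×ˢ F₂).card : ℝ) = (F₁.card : ℝ) * (F₂.card : ℝ) := by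
      rw [Finset.card_product]; push_cast; ring
    rw [hcard]
    have hc1 : (0:ℝ) ≤ (F₁.card : ℝ) := by positivity
    have hc2 : (0:ℝ) ≤ (F₂.card : ℝ) := by positivity
    calc (F₁.card : ℝ) * (F₂.card : ℝ) ≤ (6 * (1 + R ^ 2 * Q)) * (72 * L) := by
          apply mul_le_mul hb₁ hb₂ hc2 (by positivity)
      _ = 432 * (1 + R ^ 2 * Q) * L := by ring
  · -- injectivity
    intro q hq q' hq' hΦ
    have hw : w q = w q' := congrArg Prod.fst hΦ
    have hz : z q = z q' := congrArg Prod.snd hΦ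
    have e1 := hzq q hq.2.1
    have e2 := hzq q' hq'.2.1
    rw [hw, hz] at e1
    have e3 : q - q₀ (w q') = q' - q₀ (w q') := e1.symm.trans e2
    exact sub_left_inj.mp e3
  · -- membership in the box product
    intro q hq
    obtain ⟨hqS, hqN, hqR⟩ := hq
    have h1 : (Zsqrtd.norm (w q) : ℝ) ≤ R ^ 2 * Q := hnormw q hqR
    have h2 : (Zsqrtd.norm (z q) : ℝ) ≤ 8 * L := hznorm q hqN
    rw [Finset.mem_product]
    constructor
    · apply hF₁mem
      · refine habs _ (Zsqrtd.norm (w q)) (R * Real.sqrt Q) (by positivity) (hresq (w q)).1 ?_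
        rw [mul_pow, Real.sq_sqrt (by linarith : (0:ℝ) ≤ Q)]
        exact_mod_cast h1
      · refine habs _ (Zsqrtd.norm (w q)) (R * Real.sqrt Q) (by positivity) (hresq (w q)).2 ?_
        rw [mul_pow, Real.sq_sqrt (by linarith : (0:ℝ) ≤ Q)]
        exact_mod_cast h1
    · apply hF₂mem
      · refine habs _ (Zsqrtd.norm (z q)) (Real.sqrt (8 * L)) (Real.sqrt_nonneg _) (hresq (z q)).1 ?_
        rw [Real.sq_sqrt (by linarith : (0:ℝ) ≤ 8 * L)]
        exact_mod_cast h2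
      · refine habs _ (Zsqrtd.norm (z q)) (Real.sqrt (8 * L)) (Real.sqrt_nonneg _) (hresq (z q)).2 ?_
        rw [Real.sq_sqrt (by linarith : (0:ℝ) ≤ 8 * L)]
        exact_mod_cast h2
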